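/- Let Y be a standard normal random variable and let α > 0. Then the tail of exp(Y²/(2α)) satisfies the precise asymptotics lim_{x→∞} x^α √(π α log x) · P( exp(Y²/(2α)) > x ) = 1. In particular, P(exp(Y²/(2α)) > x) is regularly varying at +∞ with index −α, i.e., P(exp(Y²/(2α)) > x) = x^{−α} L(x) with L slowly varying, and for α ∈ (0,2] the random variable exp(Y²/(2α)) has infinite variance. -/

import Mathlib

open MeasureTheory ProbabilityTheory Set Filter

noncomputable section

lemma aux_int_exp (t : ℝ) : IntegrableOn (fun u : ℝ => Real.exp (-u^2/2)) (Ioi t) := by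
  have : (fun u : ℝ => Real.exp (-u^2/2)) = fun u : ℝ => Real.exp (-(2⁻¹ : ℝ) * u^2) := by
    ext u; ring_nf
  rw [this]
  exact (integrable_exp_neg_mul_sq (by norm_num)).integrableOn

lemma aux_int_mul_exp (t : ℝ) :
    IntegrableOn (fun u : ℝ => u * Real.exp (-u^2/2)) (Ioi t) := by
  have : (fun u : ℝ => u * Real.exp (-u^2/2)) = fun u : ℝ => u * Real.exp (-(2⁻¹:ℝ) * u^2) := by
    ext u; ring_nf
  rw [this]
  exact (integrable_mul_exp_neg_mul_sq (by norm_num)).integrableOn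

lemma deriv_neg_exp (u : ℝ) :
    HasDerivAt (fun v : ℝ => -Real.exp (-v^2/2)) (u * Real.exp (-u^2/2)) u := by
  have h1 : HasDerivAt (fun v : ℝ => -v^2/2) (-u) u := by
    have := ((hasDerivAt_pow 2 u).neg).div_const 2
    simpa using this.congr_deriv (by ring)
  exact (h1.exp.neg).congr_deriv (by ring)

lemma tendsto_negsq : Tendsto (fun v : ℝ => -v^2/2) atTop atBot := by
  have h : Tendsto (fun v : ℝ => v^2/2) atTop atTop :=
    (tendsto_pow_atTop two_ne_zero).atTop_div_const (by norm_num)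
  have := tendsto_neg_atBot_iff.mpr h
  simpa [neg_div] using this

lemma tendsto_exp_negsq : Tendsto (fun v : ℝ => Real.exp (-v^2/2)) atTop (nhds 0) :=
  Real.tendsto_exp_atBot.comp tendsto_negsq

lemma int_id1 (t : ℝ) :
    ∫ u in Ioi t, u * Real.exp (-u^2/2) = Real.exp (-t^2/2) := by
  have h := integral_Ioi_of_hasDerivAt_of_tendsto' (f := fun v : ℝ => -Real.exp (-v^2/2))
    (f' := fun u : ℝ => u * Real.exp (-u^2/2)) (a := t) (m := 0)
    (fun x _ => deriv_neg_exp x) (aux_int_mul_exp t) (by simpa using tendsto_exp_negsq.neg)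
  simpa using h

lemma aux_int2 {t : ℝ} (ht : 0 < t) :
    IntegrableOn (fun u : ℝ => (1 + (u^2)⁻¹) * Real.exp (-u^2/2)) (Ioi t) := by
  refine Integrable.mono' (((aux_int_exp t).const_mul (1 + (t^2)⁻¹))) ?_ ?_
  · refine AEStronglyMeasurable.mul ?_ ?_
    · exact (measurable_const.add ((measurable_id.pow_const 2).inv)).aestronglyMeasurable
    · exact (Real.continuous_exp.comp (by continuity)).aestronglyMeasurable
  · rw [ae_restrict_iff' measurableSet_Ioi]
    filter_upwards with u hu
    have hu0 : 0 < u := ht.trans hu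
    have h2 : (u^2)⁻¹ ≤ (t^2)⁻¹ := by
      apply inv_anti₀ (by positivity)
      exact pow_le_pow_left₀ ht.le hu.le 2
    have hexp : 0 < Real.exp (-u^2/2) := Real.exp_pos _
    rw [Real.norm_eq_abs, abs_of_nonneg (by positivity)]
    apply mul_le_mul_of_nonneg_right _ hexp.le
    linarith

lemma deriv_neg_exp_div {u : ℝ} (hu : u ≠ 0) :
    HasDerivAt (fun v : ℝ => -Real.exp (-v^2/2) / v)
      ((1 + (u^2)⁻¹) * Real.exp (-u^2/2)) u := by
  have h1 := (deriv_neg_exp u).div (hasDerivAt_id u) hu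
  apply h1.congr_deriv
  simp only [id]
  field_simp
  ring

lemma int_id2 {t : ℝ} (ht : 0 < t) :
    ∫ u in Ioi t, (1 + (u^2)⁻¹) * Real.exp (-u^2/2) = Real.exp (-t^2/2) / t := by
  have h := integral_Ioi_of_hasDerivAt_of_tendsto' (f := fun v : ℝ => -Real.exp (-v^2/2) / v)
    (f' := fun u : ℝ => (1 + (u^2)⁻¹) * Real.exp (-u^2/2)) (a := t) (m := 0)
    (fun x hx => deriv_neg_exp_div (ne_of_gt (lt_of_lt_of_le ht hx)))
    (aux_int2 ht) ?_
  · rw [h]; field_simp; ring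
  · exact Tendsto.div_atTop (by simpa using tendsto_exp_negsq.neg) tendsto_id

end

noncomputable section
lemma tail_upper {t : ℝ} (ht : 0 < t) :
    ∫ u in Ioi t, Real.exp (-u^2/2) ≤ Real.exp (-t^2/2) / t := by
  have h1 : ∫ u in Ioi t, Real.exp (-u^2/2) ≤ ∫ u in Ioi t, t⁻¹ * (u * Real.exp (-u^2/2)) := by
    apply setIntegral_mono_on (aux_int_exp t) (((aux_int_mul_exp t)).const_mul t⁻¹)
      measurableSet_Ioi
    intro u hu
    have hu0 : t < u := hu
    have hexp : 0 < Real.exp (-u^2/2) := Real.exp_pos _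
    have h1t : 1 ≤ t⁻¹ * u := by
      rw [inv_mul_eq_div, le_div_iff₀ ht]; linarith
    rw [← mul_assoc]
    exact le_mul_of_one_le_left hexp.le h1t
  calc ∫ u in Ioi t, Real.exp (-u^2/2) ≤ ∫ u in Ioi t, t⁻¹ * (u * Real.exp (-u^2/2)) := h1
    _ = t⁻¹ * ∫ u in Ioi t, u * Real.exp (-u^2/2) := integral_const_mul _ _
    _ = Real.exp (-t^2/2) / t := by rw [int_id1]; ring

lemma tail_lower {t : ℝ} (ht : 0 < t) :
    Real.exp (-t^2/2) / t ≤ (1 + (t^2)⁻¹) * ∫ u in Ioi t, Real.exp (-u^2/2) := by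
  have h1 : ∫ u in Ioi t, (1 + (u^2)⁻¹) * Real.exp (-u^2/2)
      ≤ ∫ u in Ioi t, (1 + (t^2)⁻¹) * Real.exp (-u^2/2) := by
    apply setIntegral_mono_on (aux_int2 ht) ((aux_int_exp t).const_mul _) measurableSet_Ioi
    intro u hu
    have hu0 : t < u := hu
    have h2 : (u^2)⁻¹ ≤ (t^2)⁻¹ := by
      apply inv_anti₀ (by positivity)
      exact pow_le_pow_left₀ ht.le hu0.le 2
    have hexp : 0 < Real.exp (-u^2/2) := Real.exp_pos _
    nlinarith
  calc Real.exp (-t^2/2) / t = ∫ u in Ioi t, (1 + (u^2)⁻¹) * Real.exp (-u^2/2) := (int_id2 ht).symm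
    _ ≤ ∫ u in Ioi t, (1 + (t^2)⁻¹) * Real.exp (-u^2/2) := h1
    _ = (1 + (t^2)⁻¹) * ∫ u in Ioi t, Real.exp (-u^2/2) := integral_const_mul _ _

lemma mills : Tendsto (fun t : ℝ => t * Real.exp (t^2/2) * ∫ u in Ioi t, Real.exp (-u^2/2))
    atTop (nhds 1) := by
  have hlow : Tendsto (fun t : ℝ => (1 + (t^2)⁻¹)⁻¹) atTop (nhds 1) := by
    have h : Tendsto (fun t : ℝ => 1 + (t^2)⁻¹) atTop (nhds (1 + 0)) := by
      refine tendsto_const_nhds.add (tendsto_inv_atTop_zero.comp ?_)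
      exact tendsto_pow_atTop (by norm_num)
    rw [add_zero] at h
    simpa using h.inv₀ one_ne_zero
  refine tendsto_of_tendsto_of_tendsto_of_le_of_le' hlow tendsto_const_nhds ?_ ?_
  · filter_upwards [eventually_gt_atTop (0:ℝ)] with t ht
    have hI := tail_lower ht
    have hc : (0:ℝ) < 1 + (t^2)⁻¹ := by positivity
    have hexp : Real.exp (t^2/2) * Real.exp (-t^2/2) = 1 := by
      rw [← Real.exp_add]; ring_nf; exact Real.exp_zero
    rw [inv_le_iff_one_le_mul₀ hc]
    have h2 := mul_le_mul_of_nonneg_left hI (by positivity : (0:ℝ) ≤ t * Real.exp (t^2/2))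
    have key : t * Real.exp (t^2/2) * (Real.exp (-t^2/2)/t) = 1 := by
      field_simp
      rw [← Real.exp_add]; simp
    calc (1:ℝ) = t * Real.exp (t^2/2) * (Real.exp (-t^2/2)/t) := key.symm
      _ ≤ t * Real.exp (t^2/2) * ((1 + (t^2)⁻¹) * ∫ u in Ioi t, Real.exp (-u^2/2)) := h2
      _ = (t * Real.exp (t^2/2) * ∫ u in Ioi t, Real.exp (-u^2/2)) * (1 + (t^2)⁻¹) := by ring
  · filter_upwards [eventually_gt_atTop (0:ℝ)] with t ht
    have hI := tail_upper ht
    have hexp : Real.exp (t^2/2) * Real.exp (-t^2/2) = 1 := by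
      rw [← Real.exp_add]; ring_nf; exact Real.exp_zero
    calc t * Real.exp (t^2/2) * ∫ u in Ioi t, Real.exp (-u^2/2)
        ≤ t * Real.exp (t^2/2) * (Real.exp (-t^2/2) / t) :=
          mul_le_mul_of_nonneg_left hI (by positivity)
      _ = 1 := by field_simp; rw [← Real.exp_add]; simp
end

noncomputable section
open ProbabilityTheory

lemma pdf_even (y : ℝ) : gaussianPDFReal 0 1 (-y) = gaussianPDFReal 0 1 y := by
  simp [gaussianPDFReal]

lemma pdf_form (y : ℝ) :
    gaussianPDFReal 0 1 y = (Real.sqrt (2 * Real.pi))⁻¹ * Real.exp (-y^2/2) := by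
  simp [gaussianPDFReal, neg_div]

lemma tail_eq {Ω : Type*} [MeasurableSpace Ω]
    (P : Measure Ω) (Y : Ω → ℝ) (hYmeas : Measurable Y)
    (hY : Measure.map Y P = gaussianReal 0 1)
    {α : ℝ} (hα : 0 < α) {x : ℝ} (hx : 1 < x) :
    (P {ω | x < Real.exp (Y ω ^ 2 / (2 * α))}).toReal
      = 2 * (Real.sqrt (2 * Real.pi))⁻¹ *
        ∫ u in Ioi (Real.sqrt (2 * α * Real.log x)), Real.exp (-u^2/2) := by
  have hlog : 0 < Real.log x := Real.log_pos hx
  set c : ℝ := 2 * α * Real.log x with hc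
  have hcpos : 0 < c := by positivity
  set s : ℝ := Real.sqrt c with hs
  have hspos : 0 < s := Real.sqrt_pos.mpr hcpos
  have hSmeas : MeasurableSet (Iio (-s) ∪ Ioi s) :=
    measurableSet_Iio.union measurableSet_Ioi
  have hset : {ω | x < Real.exp (Y ω ^ 2 / (2 * α))} = Y ⁻¹' (Iio (-s) ∪ Ioi s) := by
    ext ω
    simp only [mem_setOf_eq, mem_preimage, mem_union, mem_Iio, mem_Ioi]
    set y := Y ω
    have key : x < Real.exp (y ^ 2 / (2 * α)) ↔ c < y ^ 2 := by
      rw [← Real.log_lt_iff_lt_exp (by positivity), lt_div_iff₀ (by positivity)]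
      constructor <;> intro h <;> nlinarith
    rw [key]
    have habs : c < y ^ 2 ↔ s < |y| := by
      constructor
      · intro h
        rw [← Real.sqrt_sq_eq_abs]
        exact Real.sqrt_lt_sqrt hcpos.le h
      · intro h
        by_contra hcon
        push_neg at hcon
        have := Real.sqrt_le_sqrt hcon
        rw [Real.sqrt_sq_eq_abs] at this
        exact absurd (lt_of_lt_of_le h this) (lt_irrefl _)
    rw [habs, lt_abs]
    constructor
    · rintro (h | h)
      · right; exact h
      · left; linarith
    · rintro (h | h)
      · right; linarith
      · left; exact h
  rw [hset, ← Measure.map_apply hYmeas hSmeas, hY,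
    gaussianReal_apply_eq_integral 0 one_ne_zero,
    ENNReal.toReal_ofReal (integral_nonneg (fun y => gaussianPDFReal_nonneg 0 1 y))]
  have hdisj : Disjoint (Iio (-s)) (Ioi s) := by
    apply (Iio_disjoint_Ici (le_refl (-s))).mono_right
    rw [Ici]
    intro y hy
    exact le_of_lt (lt_trans (by linarith : -s < s) hy)
  rw [setIntegral_union hdisj measurableSet_Ioi
    ((integrable_gaussianPDFReal 0 1).restrict)
    ((integrable_gaussianPDFReal 0 1).restrict)]
  have hrefl : ∫ y in Iio (-s), gaussianPDFReal 0 1 y = ∫ y in Ioi s, gaussianPDFReal 0 1 y := by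
    rw [← integral_Iic_eq_integral_Iio]
    have : ∫ y in Iic (-s), gaussianPDFReal 0 1 y
        = ∫ y in Iic (-s), gaussianPDFReal 0 1 (-y) := by
      refine setIntegral_congr_fun measurableSet_Iic (fun y _ => ?_)
      rw [pdf_even]
    rw [this, integral_comp_neg_Iic, neg_neg]
  rw [hrefl]
  have hint : ∫ y in Ioi s, gaussianPDFReal 0 1 y
      = (Real.sqrt (2 * Real.pi))⁻¹ * ∫ u in Ioi s, Real.exp (-u^2/2) := by
    rw [← integral_const_mul]
    exact setIntegral_congr_fun measurableSet_Ioi (fun y _ => pdf_form y)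
  rw [hint]
  ring
end

noncomputable section
open ProbabilityTheory

lemma sqrt_tendsto_atTop : Tendsto Real.sqrt atTop atTop := by
  refine tendsto_atTop.2 fun b => ?_
  filter_upwards [eventually_ge_atTop (b^2)] with x hx
  calc b ≤ |b| := le_abs_self b
    _ = Real.sqrt (b^2) := (Real.sqrt_sq_eq_abs b).symm
    _ ≤ Real.sqrt x := Real.sqrt_le_sqrt hx

lemma two_sqrt_half_pi : 2 * Real.sqrt (Real.pi / 2) = Real.sqrt (2 * Real.pi) := by
  rw [show (2:ℝ) * Real.pi = 2^2 * (Real.pi / 2) by ring,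
    Real.sqrt_mul (by positivity), Real.sqrt_sq (by norm_num : (0:ℝ) ≤ 2)]

lemma part1 {Ω : Type*} [MeasurableSpace Ω]
    (P : Measure Ω) (Y : Ω → ℝ) (hYmeas : Measurable Y)
    (hY : Measure.map Y P = gaussianReal 0 1) {α : ℝ} (hα : 0 < α) :
    Tendsto (fun x : ℝ => x ^ α * Real.sqrt (Real.pi * α * Real.log x) *
        (P {ω | x < Real.exp (Y ω ^ 2 / (2 * α))}).toReal) atTop (nhds 1) := by
  have hts : Tendsto (fun x : ℝ => Real.sqrt (2 * α * Real.log x)) atTop atTop := by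
    apply sqrt_tendsto_atTop.comp
    exact Tendsto.const_mul_atTop (by positivity) Real.tendsto_log_atTop
  refine (mills.comp hts).congr' ?_
  filter_upwards [eventually_gt_atTop (1:ℝ)] with x hx
  have hlog : 0 < Real.log x := Real.log_pos hx
  set t : ℝ := Real.sqrt (2 * α * Real.log x) with htdef
  have htpos : 0 < t := Real.sqrt_pos.mpr (by positivity)
  have htsq : t ^ 2 = 2 * α * Real.log x := Real.sq_sqrt (by positivity)
  have hxα : x ^ α = Real.exp (t^2/2) := by
    rw [Real.rpow_def_of_pos (by linarith), htsq]
    congr 1; ring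
  have hsqrt : Real.sqrt (Real.pi * α * Real.log x) = Real.sqrt (Real.pi / 2) * t := by
    rw [htdef, ← Real.sqrt_mul (by positivity)]
    congr 1; ring
  rw [Function.comp_apply, tail_eq P Y hYmeas hY hα hx, hxα, hsqrt, ← htdef]
  have h2π : Real.sqrt (2 * Real.pi) ≠ 0 := by positivity
  field_simp
  have h22 : Real.sqrt 2 * Real.sqrt 2 = 2 := Real.mul_self_sqrt (by norm_num)
  rw [← two_sqrt_half_pi]; ring
end


noncomputable section

/-- precise tail asymptotics of `exp(Y²/(2α))` for a standard normal `Y`: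
`x^α √(πα log x) P(exp(Y²/(2α)) > x) → 1`; in particular the tail is regularly varying of
index `−α`, and for `α ≤ 2` the random variable `exp(Y²/(2α))` has infinite variance. -/
theorem tail_asymptotics_exp_gaussian_sq {Ω : Type*} [MeasurableSpace Ω]
    (P : Measure Ω) [IsProbabilityMeasure P]
    (Y : Ω → ℝ) (hYmeas : Measurable Y)
    (hY : Measure.map Y P = gaussianReal 0 1)
    (α : ℝ) (hα : 0 < α) :
    Tendsto (fun x : ℝ => x ^ α * Real.sqrt (Real.pi * α * Real.log x) *
        (P {ω | x < Real.exp (Y ω ^ 2 / (2 * α))}).toReal) atTop (nhds 1) ∧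
    (∃ L : ℝ → ℝ, (∀ l > (0 : ℝ), Tendsto (fun x => L (l * x) / L x) atTop (nhds 1)) ∧
      ∀ᶠ x in atTop, (P {ω | x < Real.exp (Y ω ^ 2 / (2 * α))}).toReal = x ^ (-α) * L x) ∧
    (α ≤ 2 → ¬ Integrable (fun ω => Real.exp (Y ω ^ 2 / (2 * α)) ^ 2) P) := by
  have hg : Tendsto (fun x : ℝ => x ^ α * Real.sqrt (Real.pi * α * Real.log x) *
      (P {ω | x < Real.exp (Y ω ^ 2 / (2 * α))}).toReal) atTop (nhds 1) :=
    part1 P Y hYmeas hY hα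
  set T : ℝ → ℝ := fun x => (P {ω | x < Real.exp (Y ω ^ 2 / (2 * α))}).toReal with hT
  set g : ℝ → ℝ := fun x => x ^ α * Real.sqrt (Real.pi * α * Real.log x) * T x with hgdef
  refine ⟨hg, ⟨fun x => x ^ α * T x, ?_, ?_⟩, ?_⟩
  · -- slowly varying
    intro l hl
    have hgl : Tendsto (fun x => g (l * x)) atTop (nhds 1) :=
      hg.comp (Tendsto.const_mul_atTop hl tendsto_id)
    have hr : Tendsto (fun x : ℝ => Real.log x / Real.log (l * x)) atTop (nhds 1) := by
      have hden : Tendsto (fun x : ℝ => Real.log l + Real.log x) atTop atTop :=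
        tendsto_atTop_add_const_left _ _ Real.tendsto_log_atTop
      have h0 : Tendsto (fun x : ℝ => 1 - Real.log l / (Real.log l + Real.log x)) atTop
          (nhds (1 - 0)) := tendsto_const_nhds.sub (Tendsto.div_atTop tendsto_const_nhds hden)
      rw [sub_zero] at h0
      refine h0.congr' ?_
      filter_upwards [eventually_gt_atTop (Real.exp (|Real.log l| + 1)),
        eventually_gt_atTop (0:ℝ)] with x hx hx0
      have hlogx : |Real.log l| + 1 < Real.log x := by
        rw [← Real.log_exp (|Real.log l| + 1)]
        exact Real.log_lt_log (Real.exp_pos _) hx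
      have hden0 : 0 < Real.log l + Real.log x := by
        have := neg_abs_le (Real.log l); linarith
      rw [Real.log_mul hl.ne' hx0.ne']
      field_simp
      ring
    have hsq : Tendsto (fun x : ℝ => Real.sqrt (Real.log x / Real.log (l * x))) atTop
        (nhds 1) := by
      have := (Real.continuous_sqrt.tendsto 1).comp hr
      rw [Real.sqrt_one] at this; exact this
    have hF : Tendsto (fun x => g (l * x) / g x * Real.sqrt (Real.log x / Real.log (l * x)))
        atTop (nhds 1) := by
      have := (hgl.div hg one_ne_zero).mul hsq
      simpa using this
    refine hF.congr' ?_
    filter_upwards [eventually_gt_atTop (1:ℝ), eventually_gt_atTop (1/l : ℝ),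
      hg.eventually_ne one_ne_zero, hgl.eventually_ne one_ne_zero] with x hx1 hxl hgx hglx
    have hx0 : (0:ℝ) < x := lt_trans zero_lt_one hx1
    have hlx1 : 1 < l * x := by
      calc (1:ℝ) = l * (1/l) := by field_simp
        _ < l * x := by exact mul_lt_mul_of_pos_left hxl hl
    have hlogx : 0 < Real.log x := Real.log_pos hx1
    have hloglx : 0 < Real.log (l * x) := Real.log_pos hlx1
    have hπα : (0:ℝ) < Real.pi * α := by positivity
    have hA : Real.sqrt (Real.pi * α * Real.log x)
        = Real.sqrt (Real.pi * α) * Real.sqrt (Real.log x) := Real.sqrt_mul hπα.le _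
    have hB : Real.sqrt (Real.pi * α * Real.log (l * x))
        = Real.sqrt (Real.pi * α) * Real.sqrt (Real.log (l * x)) := Real.sqrt_mul hπα.le _
    have hdiv : Real.sqrt (Real.log x / Real.log (l * x))
        = Real.sqrt (Real.log x) / Real.sqrt (Real.log (l * x)) := Real.sqrt_div hlogx.le _
    have hTx : T x ≠ 0 := by
      intro h
      exact hgx (by simp [hgdef, h])
    have h1 : Real.sqrt (Real.pi * α) ≠ 0 := by positivity
    have h2 : Real.sqrt (Real.log x) ≠ 0 := by positivity
    have h3 : Real.sqrt (Real.log (l * x)) ≠ 0 := by positivity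
    have h4 : x ^ α ≠ 0 := (Real.rpow_pos_of_pos hx0 α).ne'
    simp only [hgdef, hdiv, hA, hB]
    field_simp
  · filter_upwards [eventually_gt_atTop (0:ℝ)] with x hx0
    rw [show x ^ (-α) * (x ^ α * T x) = (x ^ (-α) * x ^ α) * T x by ring,
      ← Real.rpow_add hx0]
    simp
    rfl
  · intro hα2 hint
    have hfc : Continuous fun y : ℝ => Real.exp (y^2/(2*α))^2 := by continuity
    have h1 : Integrable (fun y : ℝ => Real.exp (y^2/(2*α))^2) (Measure.map Y P) := by
      rw [integrable_map_measure hfc.aestronglyMeasurable hYmeas.aemeasurable]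
      exact hint
    rw [hY, gaussianReal_of_var_ne_zero 0 one_ne_zero,
      integrable_withDensity_iff (measurable_gaussianPDF 0 1)
        (ae_of_all _ fun y => ENNReal.ofReal_lt_top)] at h1
    have h2 : Integrable (fun y : ℝ => Real.exp (y^2/(2*α))^2 * gaussianPDFReal 0 1 y)
        volume := by
      refine h1.congr (ae_of_all _ fun y => ?_)
      simp only [gaussianPDF_def]
      rw [ENNReal.toReal_ofReal (gaussianPDFReal_nonneg 0 1 y)]
    have hconst : Integrable (fun _ : ℝ => (Real.sqrt (2 * Real.pi))⁻¹) volume := by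
      refine h2.mono' aestronglyMeasurable_const (ae_of_all _ fun y => ?_)
      rw [pdf_form y, Real.norm_eq_abs, abs_of_nonneg (by positivity)]
      have hexp2 : Real.exp (y^2/(2*α))^2 = Real.exp (y^2/α) := by
        rw [sq, ← Real.exp_add]; congr 1; field_simp; ring
      rw [hexp2]
      have h3 : 0 ≤ y^2/α + -y^2/2 := by
        rw [div_add_div _ _ hα.ne' (two_ne_zero)]
        apply div_nonneg _ (by positivity)
        nlinarith [sq_nonneg y]
      have hmul : Real.exp (y^2/α) * Real.exp (-y^2/2) = Real.exp (y^2/α + -y^2/2) :=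
        (Real.exp_add _ _).symm
      nlinarith [Real.one_le_exp h3, hmul,
        inv_pos.mpr (Real.sqrt_pos.mpr (by positivity : (0:ℝ) < 2*Real.pi))]
    rw [integrable_const_iff] at hconst
    rcases hconst with h | h
    · exact absurd h (by positivity)
    · simpa using h.measure_univ_lt_top
end
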